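/- Let m, n be distinct points in the plane with |mn| = r, and let l¹_m, l²_m be rays from m and l¹_n, l²_n rays from n such that: the angle between l¹_m and l²_m is at least 28°, the angle between l¹_n and l²_n is at least 28°, the four pairwise intersection points u = l¹_m ∩ l¹_n, v = l¹_m ∩ l²_n, x = l²_m ∩ l²_n, y = l²_m ∩ l¹_n exist and form a convex quadrilateral uvxy, and the angle ∠(n,u,m) = θ with the additional hypotheses ∠unm ≥ 28° and ∠umn ≥ 28°. Then the area of the quadrilateral uvxy is at least (1/2)·r²·sin(28°)⁶ / sin(θ). -/

import Mathlib

open Real EuclideanGeometry MeasureTheory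
open Pointwise

local notation "E2" => EuclideanSpace ℝ (Fin 2)

lemma mem_tri {V : Type*} [AddCommGroup V] [Module ℝ V] {a b : V} {s t : ℝ}
    (hs : 0 ≤ s) (ht : 0 ≤ t) (hst : s + t ≤ 1) :
    s • a + t • b ∈ convexHull ℝ ({0, a, b} : Set V) := by
  have h := Finset.centerMass_mem_convexHull (Finset.univ : Finset (Fin 3))
    (w := ![1 - s - t, s, t]) (z := ![0, a, b]) (s := ({0, a, b} : Set V))
    (by intro i _; fin_cases i <;> simp <;> linarith)
    (by simp [Fin.sum_univ_three]; linarith)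
    (by intro i _; fin_cases i <;> simp)
  have h1 : (1:ℝ) - s - t + s + t = 1 := by ring
  simpa [Finset.centerMass, Fin.sum_univ_three, h1] using h

lemma triangle_vol (p a b : E2) :
    ENNReal.ofReal (|a 0 * b 1 - a 1 * b 0| / 4)
      ≤ volume (convexHull ℝ ({p, p + a, p + b} : Set E2)) := by
  classical
  set T : E2 →ₗ[ℝ] E2 :=
    { toFun := fun z => z 0 • a + z 1 • b
      map_add' := by
        intro z w
        simp only [PiLp.add_apply, add_smul]
        abel
      map_smul' := by
        intro c z
        simp only [PiLp.smul_apply, smul_eq_mul, RingHom.id_apply, smul_smul, smul_add] } with hT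
  have hdet : LinearMap.det T = a 0 * b 1 - a 1 * b 0 := by
    have hB := (EuclideanSpace.basisFun (Fin 2) ℝ).toBasis
    rw [← LinearMap.det_toMatrix (EuclideanSpace.basisFun (Fin 2) ℝ).toBasis T,
      Matrix.det_fin_two]
    have hTap : ∀ z, T z = z 0 • a + z 1 • b := fun z => rfl
    simp [LinearMap.toMatrix_apply, hTap, EuclideanSpace.basisFun_apply,
      EuclideanSpace.single_apply]
    ring
  set Q : Set E2 := WithLp.ofLp ⁻¹' Set.univ.pi (fun _ : Fin 2 => Set.Icc (0:ℝ) (1/2)) with hQ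
  have hQvol : volume Q = ENNReal.ofReal (1/4) := by
    have hmeas : MeasurableSet Q := by
      exact (MeasurableSet.univ_pi fun i => measurableSet_Icc).preimage (by fun_prop)
    have := (EuclideanSpace.volume_preserving_symm_measurableEquiv_toLp (Fin 2)).symm
    have h2 := this.measure_preimage (s := Q) hmeas.nullMeasurableSet
    rw [← h2]
    have hpre : (⇑(MeasurableEquiv.toLp 2 (Fin 2 → ℝ)).symm.symm ⁻¹' Q)
        = Set.univ.pi (fun _ : Fin 2 => Set.Icc (0:ℝ) (1/2)) := rfl
    rw [hpre, volume_pi_pi, Real.volume_Icc, Fin.prod_univ_two, ← ENNReal.ofReal_mul (by norm_num)]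
    norm_num
  have himg : volume (T '' Q) = ENNReal.ofReal (|a 0 * b 1 - a 1 * b 0| / 4) := by
    rw [Measure.addHaar_image_linearMap, hQvol, hdet, ← ENNReal.ofReal_mul (abs_nonneg _)]
    ring_nf
  have hsub : T '' Q ⊆ convexHull ℝ ({0, a, b} : Set E2) := by
    rintro z ⟨q, hq, rfl⟩
    rw [Set.mem_preimage, Set.mem_pi] at hq
    have h0 := hq 0 (Set.mem_univ _)
    have h1 := hq 1 (Set.mem_univ _)
    exact mem_tri h0.1 h1.1 (by have := h0.2; have := h1.2; linarith)
  have htrans : volume (convexHull ℝ ({p, p + a, p + b} : Set E2))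
      = volume (convexHull ℝ ({0, a, b} : Set E2)) := by
    have hset : ({p, p + a, p + b} : Set E2) = p +ᵥ ({0, a, b} : Set E2) := by
      rw [← Set.image_vadd]
      simp [Set.image_insert_eq, vadd_eq_add]
    rw [hset, convexHull_vadd, measure_vadd]
  rw [htrans, ← himg]
  exact measure_mono hsub

open RealInnerProductSpace in
lemma lawSin (a b c : E2) :
    Real.sin (∠ a b c) * (dist a b * dist c b) = Real.sin (∠ a c b) * (dist a c * dist b c) := by
  unfold EuclideanGeometry.angle
  simp only [vsub_eq_sub]
  rw [dist_eq_norm, dist_eq_norm, dist_eq_norm, dist_eq_norm,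
    InnerProductGeometry.sin_angle_mul_norm_mul_norm,
    InnerProductGeometry.sin_angle_mul_norm_mul_norm]
  congr 1
  simp only [inner_sub_left, inner_sub_right]
  rw [real_inner_comm b a, real_inner_comm c a, real_inner_comm c b]
  ring

lemma sin_ge_of_mem {s x : ℝ} (hs0 : 0 ≤ s) (hsle : s ≤ π / 2) (h1 : s ≤ x) (h2 : x ≤ π - s) :
    Real.sin s ≤ Real.sin x := by
  rcases le_or_gt x (π / 2) with h | h
  · exact Real.sin_le_sin_of_le_of_le_pi_div_two (by linarith [Real.pi_pos]) h h1
  · rw [← Real.sin_pi_sub x]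
    exact Real.sin_le_sin_of_le_of_le_pi_div_two (by linarith [Real.pi_pos]) (by linarith) (by linarith)

lemma s28_pos : 0 < 28 * π / 180 := by positivity

lemma s28_le : 28 * π / 180 ≤ π / 2 := by nlinarith [Real.pi_pos]

lemma dist_ge {u n v : E2} (hnc : ¬ Collinear ℝ ({u, n, v} : Set E2))
    (hn : 28 * π / 180 ≤ ∠ u n v) :
    Real.sin (28 * π / 180) * dist u n ≤ dist u v := by
  have hun : u ≠ n := by
    rintro rfl
    exact hnc (by simp [Set.insert_comm, collinear_pair])
  have hvn : v ≠ n := by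
    rintro rfl
    exact hnc (by simp [Set.pair_comm, collinear_pair])
  have hvu : v ≠ u := by
    rintro rfl
    exact hnc (by simp [collinear_pair])
  have hcol2 : ¬ Collinear ℝ ({u, v, n} : Set E2) := by
    rw [Set.pair_comm v n]
    exact hnc
  rw [collinear_iff_eq_or_eq_or_angle_eq_zero_or_angle_eq_pi] at hcol2
  push_neg at hcol2
  obtain ⟨-, -, ha0, haπ⟩ := hcol2
  have huvn_pos : 0 < ∠ u v n := (angle_nonneg u v n).lt_of_ne (Ne.symm ha0)
  have huvn_lt : ∠ u v n < π := (angle_le_pi u v n).lt_of_ne haπ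
  have hsum : ∠ u n v + ∠ n v u + ∠ v u n = π :=
    angle_add_angle_add_angle_eq_pi v (Ne.symm hun)
  rw [angle_comm n v u] at hsum
  have hs := lawSin u n v
  rw [dist_comm n v] at hs
  have hs' : Real.sin (∠ u n v) * dist u n = Real.sin (∠ u v n) * dist u v := by
    have hd : dist v n ≠ 0 := dist_ne_zero.2 hvn
    rw [← mul_assoc, ← mul_assoc] at hs
    exact mul_right_cancel₀ hd hs
  have hsin_le_one := Real.sin_le_one (∠ u v n)
  have hd_nonneg : (0:ℝ) ≤ dist u n := dist_nonneg
  have hduv : (0:ℝ) ≤ dist u v := dist_nonneg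
  rcases le_or_gt (∠ u n v) (π - 28 * π / 180) with hcase | hcase
  · have h1 : Real.sin (28 * π / 180) ≤ Real.sin (∠ u n v) :=
      sin_ge_of_mem s28_pos.le s28_le hn hcase
    calc Real.sin (28 * π / 180) * dist u n ≤ Real.sin (∠ u n v) * dist u n :=
          mul_le_mul_of_nonneg_right h1 hd_nonneg
      _ = Real.sin (∠ u v n) * dist u v := hs'
      _ ≤ 1 * dist u v := mul_le_mul_of_nonneg_right hsin_le_one hduv
      _ = dist u v := one_mul _
  · have hvun := angle_nonneg v u n
    have huvn := angle_nonneg u v n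
    have hsum2 : ∠ u v n + ∠ v u n = π - ∠ u n v := by linarith
    have hsin_le : Real.sin (∠ u v n) ≤ Real.sin (∠ u n v) := by
      rw [← Real.sin_pi_sub (∠ u n v), ← hsum2]
      exact Real.sin_le_sin_of_le_of_le_pi_div_two (by linarith [Real.pi_pos])
        (by linarith [s28_le]) (by linarith)
    have hsin_pos : 0 < Real.sin (∠ u v n) := Real.sin_pos_of_pos_of_lt_pi huvn_pos huvn_lt
    have hle : dist u n ≤ dist u v := by
      have : Real.sin (∠ u v n) * dist u n ≤ Real.sin (∠ u v n) * dist u v := by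
        calc Real.sin (∠ u v n) * dist u n ≤ Real.sin (∠ u n v) * dist u n :=
              mul_le_mul_of_nonneg_right hsin_le hd_nonneg
          _ = Real.sin (∠ u v n) * dist u v := hs'
      exact le_of_mul_le_mul_left this hsin_pos
    calc Real.sin (28 * π / 180) * dist u n ≤ 1 * dist u n :=
          mul_le_mul_of_nonneg_right (Real.sin_le_one _) hd_nonneg
      _ = dist u n := one_mul _
      _ ≤ dist u v := hle

lemma collinear_shift {u n v w : E2} {l : ℝ} (hl : l ≠ 0) (hv : v - u = l • (w - u))
    (h : Collinear ℝ ({u, n, v} : Set E2)) : Collinear ℝ ({u, n, w} : Set E2) := by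
  rw [collinear_iff_of_mem (Set.mem_insert u {n, v})] at h
  obtain ⟨z, hz⟩ := h
  rw [collinear_iff_of_mem (Set.mem_insert u {n, w})]
  refine ⟨z, ?_⟩
  intro p hp
  simp only [Set.mem_insert_iff, Set.mem_singleton_iff] at hp
  rcases hp with h | h | h
  · exact ⟨0, by simp [h]⟩
  · obtain ⟨r, hr⟩ := hz n (by simp)
    exact ⟨r, by rw [h, hr]⟩
  obtain ⟨rv, hrv⟩ := hz v (by simp)
  refine ⟨l⁻¹ * rv, ?_⟩
  rw [h]
  have h1 : v - u = rv • z := by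
    rw [hrv]; simp [vadd_eq_add]
  rw [hv] at h1
  have h2 : w - u = (l⁻¹ * rv) • z := by
    simpa [smul_smul, inv_mul_cancel₀ hl] using congrArg (fun t => l⁻¹ • t) h1
  simp [vadd_eq_add, ← h2]

open RealInnerProductSpace in
lemma abs_det_eq_sin (A B : E2) :
    |A 0 * B 1 - A 1 * B 0| = Real.sin (InnerProductGeometry.angle A B) * (‖A‖ * ‖B‖) := by
  rw [InnerProductGeometry.sin_angle_mul_norm_mul_norm, ← Real.sqrt_sq_eq_abs]
  congr 1
  simp only [PiLp.inner_apply, RCLike.inner_apply, conj_trivial, Fin.sum_univ_two]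
  ring


set_option maxHeartbeats 2000000 in
/-- Quadrilateral area lower bound: with m, n at distance r, rays from m through u,v and
through x,y, rays from n through u,y and through v,x, angles at m and n between the rays
at least 28°, ∠num = θ, ∠unm ≥ 28°, ∠umn ≥ 28°, the convex quadrilateral uvxy has
area at least (1/2)·r²·sin(28°)⁶/sin θ. -/
theorem stmt_2 (m n u v x y : EuclideanSpace ℝ (Fin 2)) (r θ : ℝ)
    (hmn : m ≠ n) (hr : dist m n = r)
    -- u, v lie on the ray l¹_m from m; x, y lie on the ray l²_m from m
    (huv : SameRay ℝ (u - m) (v - m))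
    (hxy : SameRay ℝ (x - m) (y - m))
    -- u, y lie on the ray l¹_n from n; v, x lie on the ray l²_n from n
    (huy : SameRay ℝ (u - n) (y - n))
    (hvx : SameRay ℝ (v - n) (x - n))
    -- the two rays at m make an angle at least 28°, similarly at n
    (hm : 28 * π / 180 ≤ EuclideanGeometry.angle u m y)
    (hn : 28 * π / 180 ≤ EuclideanGeometry.angle u n v)
    (hθ : EuclideanGeometry.angle n u m = θ)
    (hunm : 28 * π / 180 ≤ EuclideanGeometry.angle u n m)
    (humn : 28 * π / 180 ≤ EuclideanGeometry.angle u m n) :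
    ENNReal.ofReal (1 / 2 * r ^ 2 * Real.sin (28 * π / 180) ^ 6 / Real.sin θ) ≤
      volume (convexHull ℝ ({u, v, x, y} : Set (EuclideanSpace ℝ (Fin 2)))) := by
  subst hθ
  subst hr
  set S := Real.sin (28 * π / 180) with hS
  have hπ := Real.pi_pos
  have hs28 := s28_pos
  have hS0 : 0 < S := Real.sin_pos_of_pos_of_lt_pi s28_pos (by nlinarith)
  have hS1 : S ≤ 1 := Real.sin_le_one _
  have hS2 : S ^ 2 ≤ 1 / 2 := by
    have h4 : S ≤ Real.sin (π / 4) := by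
      apply Real.sin_le_sin_of_le_of_le_pi_div_two (by nlinarith) (by nlinarith) (by nlinarith)
    rw [Real.sin_pi_div_four] at h4
    nlinarith [Real.sq_sqrt (by norm_num : (0:ℝ) ≤ 2), Real.sqrt_nonneg 2]
  -- distinctness
  have hum : u ≠ m := by
    intro h
    rw [h, angle_self_of_ne hmn] at hunm
    linarith
  have hun : u ≠ n := by
    intro h
    rw [h, angle_self_of_ne hmn.symm] at humn
    linarith
  -- noncollinearity of u, n, m
  have hncol : ¬ Collinear ℝ ({u, n, m} : Set (EuclideanSpace ℝ (Fin 2))) := by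
    intro hc
    rcases collinear_iff_eq_or_eq_or_angle_eq_zero_or_angle_eq_pi.1 hc with h | h | h | h
    · exact hun h
    · exact hmn h
    · rw [h] at hunm; linarith
    · have hsb := angle_eq_pi_iff_sbtw.1 h
      have hw : Wbtw ℝ m n u := hsb.wbtw.symm
      have h0 : ∠ n m u = 0 := angle_eq_zero_iff_ne_and_wbtw.2 (Or.inl ⟨hmn.symm, hw⟩)
      rw [angle_comm] at h0
      rw [h0] at humn; linarith
  have hncol' : ¬ Collinear ℝ ({u, m, n} : Set (EuclideanSpace ℝ (Fin 2))) := by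
    rw [Set.pair_comm m n]; exact hncol
  -- θ strictly between 0 and π
  have hθpos : 0 < ∠ n u m := by
    rcases (angle_nonneg n u m).lt_or_eq with h | h
    · exact h
    · exfalso
      apply hncol
      have := collinear_of_angle_eq_zero h.symm
      rwa [Set.insert_comm] at this
  have hθlt : ∠ n u m < π := by
    rcases (angle_le_pi n u m).lt_or_eq with h | h
    · exact h
    · exfalso
      apply hncol
      have := collinear_of_angle_eq_pi h
      rwa [Set.insert_comm] at this
  have hstθ : 0 < Real.sin (∠ n u m) := Real.sin_pos_of_pos_of_lt_pi hθpos hθlt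
  -- angle sum in triangle u m n
  have hsum : ∠ u m n + ∠ m n u + ∠ n u m = π :=
    angle_add_angle_add_angle_eq_pi n hum.symm
  have hmnu : ∠ m n u = ∠ u n m := angle_comm m n u
  have humn_le : ∠ u m n ≤ π - 28 * π / 180 := by
    rw [hmnu] at hsum
    linarith [angle_nonneg n u m]
  have hunm_le : ∠ u n m ≤ π - 28 * π / 180 := by
    rw [hmnu] at hsum
    linarith [angle_nonneg n u m]
  -- law of sines in triangle u m n
  have hL1 := lawSin n u m
  rw [angle_comm n m u, dist_comm n m, dist_comm m u] at hL1
  have hDn : Real.sin (∠ n u m) * dist n u = Real.sin (∠ u m n) * dist m n := by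
    rw [← mul_assoc, ← mul_assoc] at hL1
    exact mul_right_cancel₀ (dist_ne_zero.2 hum) hL1
  have hL2 := lawSin m u n
  rw [angle_comm m u n, angle_comm m n u, dist_comm u n] at hL2
  have hDm : Real.sin (∠ n u m) * dist m u = Real.sin (∠ u n m) * dist m n := by
    rw [← mul_assoc, ← mul_assoc] at hL2
    exact mul_right_cancel₀ (dist_ne_zero.2 (fun h => hun h.symm)) hL2
  have hb1 : S * dist m n ≤ Real.sin (∠ n u m) * dist n u := by
    rw [hDn]
    exact mul_le_mul_of_nonneg_right (sin_ge_of_mem s28_pos.le s28_le humn humn_le) dist_nonneg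
  have hb2 : S * dist m n ≤ Real.sin (∠ n u m) * dist m u := by
    rw [hDm]
    exact mul_le_mul_of_nonneg_right (sin_ge_of_mem s28_pos.le s28_le hunm hunm_le) dist_nonneg
  -- v on line u m
  obtain ⟨c, hc0, hc⟩ := huv.exists_nonneg_left (sub_ne_zero.2 hum)
  have hvu : v ≠ u := by
    intro h
    rw [h, angle_self_of_ne hun] at hn
    linarith
  have hv' : v = c • (u - m) + m := by
    have := hc.symm
    rw [sub_eq_iff_eq_add] at this
    exact this
  have hveq : v - u = (1 - c) • (m - u) := by
    rw [hv']
    simp only [smul_sub, sub_smul, one_smul]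
    abel
  have hlv : (1 : ℝ) - c ≠ 0 := by
    intro h
    apply hvu
    have h2 := hveq
    rw [h, zero_smul, sub_eq_zero] at h2
    exact h2
  have hncv : ¬ Collinear ℝ ({u, n, v} : Set (EuclideanSpace ℝ (Fin 2))) :=
    fun hcol => hncol (collinear_shift hlv hveq hcol)
  have hv_bound : S * dist u n ≤ dist u v := dist_ge hncv hn
  -- y on line u n
  obtain ⟨d, hd0, hd⟩ := huy.exists_nonneg_left (sub_ne_zero.2 hun)
  have hyu : y ≠ u := by
    intro h
    rw [h, angle_self_of_ne hum] at hm
    linarith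
  have hy' : y = d • (u - n) + n := by
    have := hd.symm
    rw [sub_eq_iff_eq_add] at this
    exact this
  have hyeq : y - u = (1 - d) • (n - u) := by
    rw [hy']
    simp only [smul_sub, sub_smul, one_smul]
    abel
  have hly : (1 : ℝ) - d ≠ 0 := by
    intro h
    apply hyu
    have h2 := hyeq
    rw [h, zero_smul, sub_eq_zero] at h2
    exact h2
  have hncy : ¬ Collinear ℝ ({u, m, y} : Set (EuclideanSpace ℝ (Fin 2))) :=
    fun hcol => hncol' (collinear_shift hly hyeq hcol)
  have hy_bound : S * dist u m ≤ dist u y := dist_ge hncy hm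
  -- determinant identity
  have habs : |(v - u) 0 * (y - u) 1 - (v - u) 1 * (y - u) 0|
      = Real.sin (∠ n u m) * (dist u v * dist u y) := by
    have ha : InnerProductGeometry.angle (m - u) (n - u) = ∠ n u m := by
      rw [InnerProductGeometry.angle_comm]
      rfl
    have hnv : dist u v = |1 - c| * ‖m - u‖ := by
      rw [dist_comm, dist_eq_norm, hveq, norm_smul, Real.norm_eq_abs]
    have hny : dist u y = |1 - d| * ‖n - u‖ := by
      rw [dist_comm, dist_eq_norm, hyeq, norm_smul, Real.norm_eq_abs]
    calc |(v - u) 0 * (y - u) 1 - (v - u) 1 * (y - u) 0|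
        = |((1 - c) * (1 - d)) * ((m - u) 0 * (n - u) 1 - (m - u) 1 * (n - u) 0)| := by
          congr 1
          rw [hveq, hyeq]
          simp only [PiLp.smul_apply, smul_eq_mul]
          ring
      _ = |1 - c| * |1 - d| * (Real.sin (InnerProductGeometry.angle (m - u) (n - u)) * (‖m - u‖ * ‖n - u‖)) := by
          rw [abs_mul, abs_mul, abs_det_eq_sin]
      _ = Real.sin (∠ n u m) * (dist u v * dist u y) := by
          rw [ha, hnv, hny]
          ring
  -- assemble
  have htri := triangle_vol u (v - u) (y - u)
  have e1 : u + (v - u) = v := by abel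
  have e2 : u + (y - u) = y := by abel
  rw [e1, e2] at htri
  have hsub2 : ({u, v, y} : Set (EuclideanSpace ℝ (Fin 2))) ⊆ {u, v, x, y} := by
    intro z hz
    simp only [Set.mem_insert_iff, Set.mem_singleton_iff] at hz ⊢
    tauto
  refine le_trans ?_ (le_trans htri (measure_mono (convexHull_mono hsub2)))
  apply ENNReal.ofReal_le_ofReal
  rw [habs]
  have h1 : S ^ 2 * dist m n ≤ Real.sin (∠ n u m) * dist u v := by
    calc S ^ 2 * dist m n = S * (S * dist m n) := by ring
      _ ≤ S * (Real.sin (∠ n u m) * dist n u) := mul_le_mul_of_nonneg_left hb1 hS0.le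
      _ = Real.sin (∠ n u m) * (S * dist u n) := by rw [dist_comm n u]; ring
      _ ≤ Real.sin (∠ n u m) * dist u v := mul_le_mul_of_nonneg_left hv_bound hstθ.le
  have h2 : S ^ 2 * dist m n ≤ Real.sin (∠ n u m) * dist u y := by
    calc S ^ 2 * dist m n = S * (S * dist m n) := by ring
      _ ≤ S * (Real.sin (∠ n u m) * dist m u) := mul_le_mul_of_nonneg_left hb2 hS0.le
      _ = Real.sin (∠ n u m) * (S * dist u m) := by rw [dist_comm m u]; ring
      _ ≤ Real.sin (∠ n u m) * dist u y := mul_le_mul_of_nonneg_left hy_bound hstθ.le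
  rw [div_le_div_iff₀ hstθ (by norm_num : (0:ℝ) < 4)]
  have hA : (S ^ 2 * dist m n) * (S ^ 2 * dist m n)
      ≤ (Real.sin (∠ n u m) * dist u v) * (Real.sin (∠ n u m) * dist u y) :=
    mul_le_mul h1 h2 (by positivity) (le_trans (by positivity) h1)
  nlinarith [hA, mul_le_mul_of_nonneg_left hS2 (show (0:ℝ) ≤ S ^ 4 * dist m n ^ 2 by positivity)]
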